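/- Let n ≥ 1, f ∈ LCₙ, and let T : ℝⁿ → ℝⁿ be an invertible linear map. Then the functional affine surface area satisfies Ω♯(f∘T) = |det T|^{−(n−1)/(n+1)} · Ω♯(f). In particular, if |det T| = 1 then Ω♯(f∘T) = Ω♯(f). -/

import Mathlib

open MeasureTheory Filter Set Metric
open scoped Topology NNReal ENNReal Pointwise RealInnerProductSpace

noncomputable section

abbrev Euc (n : ℕ) := EuclideanSpace ℝ (Fin n)

/-- `f` is log-concave: `f((1-λ)x + λy) ≥ f(x)^{1-λ} f(y)^λ`. -/
def IsLogConcaveFn {n : ℕ} (f : Euc n → ℝ) : Prop :=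
  ∀ x y : Euc n, ∀ a b : ℝ, 0 ≤ a → 0 ≤ b → a + b = 1 →
    (f x) ^ a * (f y) ^ b ≤ f (a • x + b • y)

/-- The class `LCₙ`. -/
structure MemLC {n : ℕ} (f : Euc n → ℝ) : Prop where
  nonneg : ∀ x, 0 ≤ f x
  usc : UpperSemicontinuous f
  logConcave : IsLogConcaveFn f
  nonzero : ∃ x, 0 < f x
  tendsto_zero : Tendsto f (cocompact (Euc n)) (𝓝 0)
  support_interior : (interior {x | 0 < f x}).Nonempty

/-- `(f ⋆ (t·1_C))(x) = sup_{z ∈ tC} f(x − z)`. -/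
def indSup {n : ℕ} (f : Euc n → ℝ) (C : Set (Euc n)) (t : ℝ) (x : Euc n) : ℝ :=
  ⨆ z ∈ t • C, f (x - z)

/-- The first variation `δ(f, 1_C)` exists and equals `a`. -/
def HasVarInd {n : ℕ} (f : Euc n → ℝ) (C : Set (Euc n)) (a : ℝ) : Prop :=
  Tendsto (fun t : ℝ => ((∫ x, indSup f C t x) - ∫ x, f x) / t)
    (𝓝[>] (0 : ℝ)) (𝓝 a)

/-- The radial function `ρ_Q(u) = max {r ≥ 0 : r u ∈ Q}`. -/
def radialFn {n : ℕ} (Q : Set (Euc n)) (u : Euc n) : ℝ :=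
  sSup {r : ℝ | 0 ≤ r ∧ r • u ∈ Q}

/-- A centered star body: compact, `0` in the interior, star-shaped about the origin,
continuous radial function on the sphere, centroid at the origin. -/
structure IsCenteredStarBody {n : ℕ} (Q : Set (Euc n)) : Prop where
  compact : IsCompact Q
  zero_mem_interior : (0 : Euc n) ∈ interior Q
  starShaped : ∀ x ∈ Q, ∀ r : ℝ, 0 ≤ r → r ≤ 1 → r • x ∈ Q
  radial_continuous : ContinuousOn (radialFn Q) (sphere (0 : Euc n) 1)
  centroid_zero : (∫ x in Q, x) = (0 : Euc n)

/-- The polar set `Q° = {y : ⟪x,y⟫ ≤ 1 for all x ∈ Q}`. -/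
def polarSet {n : ℕ} (Q : Set (Euc n)) : Set (Euc n) :=
  {y : Euc n | ∀ x ∈ Q, ⟪x, y⟫ ≤ 1}

/-- The set `A_f = {a · vol(Q)^{1/n} : Q a centered star body with δ(f, 1_{Q°}) = a}`. -/
def asaSet (n : ℕ) (f : Euc n → ℝ) : Set ℝ :=
  {y : ℝ | ∃ (Q : Set (Euc n)) (a : ℝ), IsCenteredStarBody Q ∧
    HasVarInd f (polarSet Q) a ∧ y = a * (volume Q).toReal ^ ((1 : ℝ) / n)}

/-- The functional affine surface area `Ω♯(f) = n^{1/(n+1)} (inf A_f)^{n/(n+1)}`. -/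
def affSA (n : ℕ) (f : Euc n → ℝ) : ℝ :=
  (n : ℝ) ^ ((1 : ℝ) / ((n : ℝ) + 1)) * (sInf (asaSet n f)) ^ ((n : ℝ) / ((n : ℝ) + 1))

namespace StmtAux

variable {n : ℕ}



lemma mul_rpow_pos_left {c : ℝ} (hc : 0 < c) (x : ℝ) {p : ℝ} (hp : p ≠ 0) :
    (c * x) ^ p = c ^ p * x ^ p := by
  rcases lt_trichotomy x 0 with hx | rfl | hx
  · rw [Real.rpow_def_of_neg (mul_neg_of_pos_of_neg hc hx), Real.rpow_def_of_neg hx,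
      Real.rpow_def_of_pos hc, Real.log_mul hc.ne' hx.ne, add_mul, Real.exp_add]
    ring
  · rw [mul_zero, Real.zero_rpow hp, mul_zero]
  · exact Real.mul_rpow hc.le hx.le

def adjEquiv (T : Euc n ≃ₗ[ℝ] Euc n) : Euc n ≃ₗ[ℝ] Euc n :=
  LinearEquiv.ofLinear (LinearMap.adjoint (T : Euc n →ₗ[ℝ] Euc n))
    (LinearMap.adjoint (T.symm : Euc n →ₗ[ℝ] Euc n))
    (by
      rw [← LinearMap.adjoint_comp]
      have h : (T.symm : Euc n →ₗ[ℝ] Euc n) ∘ₗ (T : Euc n →ₗ[ℝ] Euc n) = LinearMap.id := by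
        ext x; simp
      rw [h]
      exact ((LinearMap.eq_adjoint_iff LinearMap.id LinearMap.id).mpr (fun x y => rfl)).symm)
    (by
      rw [← LinearMap.adjoint_comp]
      have h : (T : Euc n →ₗ[ℝ] Euc n) ∘ₗ (T.symm : Euc n →ₗ[ℝ] Euc n) = LinearMap.id := by
        ext x; simp
      rw [h]
      exact ((LinearMap.eq_adjoint_iff LinearMap.id LinearMap.id).mpr (fun x y => rfl)).symm)

lemma adjEquiv_coe (T : Euc n ≃ₗ[ℝ] Euc n) :
    (adjEquiv T : Euc n →ₗ[ℝ] Euc n) = LinearMap.adjoint (T : Euc n →ₗ[ℝ] Euc n) := rfl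

lemma adjEquiv_apply (T : Euc n ≃ₗ[ℝ] Euc n) (x : Euc n) :
    adjEquiv T x = LinearMap.adjoint (T : Euc n →ₗ[ℝ] Euc n) x := rfl

lemma det_adjoint (A : Euc n →ₗ[ℝ] Euc n) :
    LinearMap.det (LinearMap.adjoint A) = LinearMap.det A := by
  classical
  rw [← LinearMap.det_toMatrix (EuclideanSpace.basisFun (Fin n) ℝ).toBasis,
    ← LinearMap.det_toMatrix (EuclideanSpace.basisFun (Fin n) ℝ).toBasis A,
    LinearMap.toMatrix_adjoint, Matrix.det_conjTranspose, star_trivial]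

lemma integral_comp_equiv {F : Type*} [NormedAddCommGroup F] [NormedSpace ℝ F]
    (T : Euc n ≃ₗ[ℝ] Euc n) (g : Euc n → F) :
    ∫ x, g (T x) = |LinearMap.det (T : Euc n →ₗ[ℝ] Euc n)|⁻¹ • ∫ x, g x := by
  have hd : LinearMap.det (T : Euc n →ₗ[ℝ] Euc n) ≠ 0 := (LinearEquiv.isUnit_det' T).ne_zero
  let e : Euc n ≃ᵐ Euc n := T.toContinuousLinearEquiv.toHomeomorph.toMeasurableEquiv
  have he : ⇑e = ⇑T := rfl
  have hmap : Measure.map (⇑e) (volume : Measure (Euc n))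
      = ENNReal.ofReal |(LinearMap.det (T : Euc n →ₗ[ℝ] Euc n))⁻¹| • volume := by
    rw [he, ← LinearEquiv.coe_coe]
    exact Measure.map_linearMap_addHaar_eq_smul_addHaar volume hd
  calc ∫ x, g (T x) = ∫ x, g (e x) := by rw [he]
    _ = ∫ y, g y ∂(Measure.map e volume) := (integral_map_equiv e g).symm
    _ = |LinearMap.det (T : Euc n →ₗ[ℝ] Euc n)|⁻¹ • ∫ x, g x := by
        rw [hmap, integral_smul_measure, ENNReal.toReal_ofReal (abs_nonneg _), abs_inv]

lemma biSup_image (e : Euc n ≃ₗ[ℝ] Euc n) (s : Set (Euc n)) (g : Euc n → ℝ) :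
    ⨆ z ∈ ⇑e '' s, g z = ⨆ w ∈ s, g (e w) := by
  rw [← Equiv.iSup_comp (e := e.toEquiv) (g := fun z => ⨆ _ : z ∈ ⇑e '' s, g z)]
  simp only [LinearEquiv.coe_toEquiv, Function.Injective.mem_set_image e.injective]

lemma smul_image_comm (e : Euc n ≃ₗ[ℝ] Euc n) (t : ℝ) (C : Set (Euc n)) :
    t • (⇑e '' C) = ⇑e '' (t • C) := by
  ext z
  simp only [Set.mem_smul_set, Set.mem_image]
  constructor
  · rintro ⟨_, ⟨c, hc, rfl⟩, rfl⟩
    exact ⟨t • c, ⟨c, hc, rfl⟩, map_smul e t c⟩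
  · rintro ⟨_, ⟨c, hc, rfl⟩, rfl⟩
    exact ⟨e c, ⟨c, hc, rfl⟩, (map_smul e t c).symm⟩

lemma indSup_comp (f : Euc n → ℝ) (T : Euc n ≃ₗ[ℝ] Euc n) (C : Set (Euc n)) (t : ℝ) (x : Euc n) :
    indSup (fun y => f (T y)) (⇑T.symm '' C) t x = indSup f C t (T x) := by
  unfold indSup
  rw [smul_image_comm, biSup_image T.symm]
  exact biSup_congr fun w _ => by simp only []; rw [map_sub, T.apply_symm_apply]

lemma hasVar_comp (f : Euc n → ℝ) (T : Euc n ≃ₗ[ℝ] Euc n) (C : Set (Euc n)) {a : ℝ}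
    (h : HasVarInd f C a) :
    HasVarInd (fun x => f (T x)) (⇑T.symm '' C)
      (|LinearMap.det (T : Euc n →ₗ[ℝ] Euc n)|⁻¹ * a) := by
  unfold HasVarInd at h ⊢
  have key : ∀ t : ℝ,
      |LinearMap.det (T : Euc n →ₗ[ℝ] Euc n)|⁻¹ * (((∫ x, indSup f C t x) - ∫ x, f x) / t)
      = ((∫ x, indSup (fun y => f (T y)) (⇑T.symm '' C) t x) - ∫ x, f (T x)) / t := by
    intro t
    have h1 : (∫ x, indSup (fun y => f (T y)) (⇑T.symm '' C) t x)
        = |LinearMap.det (T : Euc n →ₗ[ℝ] Euc n)|⁻¹ * ∫ x, indSup f C t x := by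
      simp_rw [indSup_comp]
      simpa using integral_comp_equiv T (indSup f C t)
    have h2 : (∫ x, f (T x)) = |LinearMap.det (T : Euc n →ₗ[ℝ] Euc n)|⁻¹ * ∫ x, f x := by
      simpa using integral_comp_equiv T f
    rw [h1, h2]; ring
  exact (h.const_mul _).congr key

lemma radialFn_image (S : Euc n ≃ₗ[ℝ] Euc n) (Q : Set (Euc n)) (u : Euc n) :
    radialFn (⇑S '' Q) u = radialFn Q (S.symm u) := by
  unfold radialFn
  congr 1
  ext r
  simp only [mem_setOf_eq, and_congr_right_iff]
  intro _
  constructor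
  · rintro ⟨q, hq, hEq⟩
    have hq' : q = r • S.symm u := by
      apply S.injective
      show S q = S (r • S.symm u)
      rw [_root_.map_smul, S.apply_symm_apply]
      exact hEq
    rwa [← hq']
  · intro h
    refine ⟨r • S.symm u, h, ?_⟩
    show S (r • S.symm u) = r • u
    rw [_root_.map_smul, S.apply_symm_apply]

lemma radialFn_smul (Q : Set (Euc n)) (v : Euc n) {c : ℝ} (hc : 0 < c) :
    radialFn Q (c • v) = c⁻¹ * radialFn Q v := by
  unfold radialFn
  have h : {r : ℝ | 0 ≤ r ∧ r • (c • v) ∈ Q} = c⁻¹ • {r : ℝ | 0 ≤ r ∧ r • v ∈ Q} := by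
    ext r
    simp only [mem_setOf_eq, Set.mem_smul_set, smul_eq_mul]
    constructor
    · rintro ⟨hr, hmem⟩
      refine ⟨c * r, ⟨by positivity, ?_⟩, by field_simp⟩
      rwa [smul_smul, mul_comm r c] at hmem
    · rintro ⟨s, ⟨hs, hmem⟩, rfl⟩
      refine ⟨by positivity, ?_⟩
      rw [smul_smul, show c⁻¹ * s * c = s by field_simp]
      exact hmem
  rw [h, Real.sSup_smul_of_nonneg (by positivity), smul_eq_mul]

lemma isCSB_image {Q : Set (Euc n)} (S : Euc n ≃ₗ[ℝ] Euc n) (hQ : IsCenteredStarBody Q) :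
    IsCenteredStarBody (⇑S '' Q) := by
  have hScont : Continuous ⇑S := S.toContinuousLinearEquiv.continuous
  have hsymm_ne : ∀ u ∈ sphere (0 : Euc n) 1, ‖S.symm u‖ ≠ 0 := by
    intro u hu
    have hu0 : u ≠ 0 := by
      rw [mem_sphere_zero_iff_norm] at hu
      intro h; rw [h, norm_zero] at hu; norm_num at hu
    simpa [norm_ne_zero_iff] using fun h => hu0 (by simpa using congrArg S h)
  constructor
  · exact hQ.compact.image hScont
  · let e := S.toContinuousLinearEquiv.toHomeomorph
    have h0 : (0 : Euc n) ∈ ⇑e '' interior Q := ⟨0, hQ.zero_mem_interior, map_zero S⟩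
    rw [e.image_interior] at h0
    exact h0
  · rintro y ⟨x, hx, rfl⟩ r hr hr1
    exact ⟨r • x, hQ.starShaped x hx r hr hr1, (_root_.map_smul S r x)⟩
  · -- radial continuity
    have hs : Continuous fun u : Euc n => S.symm u := S.symm.toContinuousLinearEquiv.continuous
    have h1 : ContinuousOn (fun u : Euc n => ‖S.symm u‖⁻¹) (sphere 0 1) :=
      (hs.norm.continuousOn).inv₀ hsymm_ne
    have h2 : ContinuousOn (fun u : Euc n => ‖S.symm u‖⁻¹ • S.symm u) (sphere 0 1) :=
      h1.smul hs.continuousOn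
    have hmaps : MapsTo (fun u : Euc n => ‖S.symm u‖⁻¹ • S.symm u)
        (sphere (0 : Euc n) 1) (sphere (0 : Euc n) 1) := by
      intro u hu
      have hne := hsymm_ne u hu
      rw [mem_sphere_zero_iff_norm, norm_smul, norm_inv, norm_norm]
      field_simp
    have hcont : ContinuousOn
        (fun u : Euc n => ‖S.symm u‖⁻¹ * radialFn Q (‖S.symm u‖⁻¹ • S.symm u))
        (sphere (0 : Euc n) 1) :=
      h1.mul (hQ.radial_continuous.comp h2 hmaps)
    refine ContinuousOn.congr hcont ?_
    intro u hu
    have hne := hsymm_ne u hu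
    have hpos : 0 < ‖S.symm u‖ := lt_of_le_of_ne (norm_nonneg _) (Ne.symm hne)
    calc radialFn (⇑S '' Q) u = radialFn Q (S.symm u) := radialFn_image S Q u
      _ = radialFn Q (‖S.symm u‖ • (‖S.symm u‖⁻¹ • S.symm u)) := by
          rw [smul_smul, mul_inv_cancel₀ hne, one_smul]
      _ = ‖S.symm u‖⁻¹ * radialFn Q (‖S.symm u‖⁻¹ • S.symm u) := by
          rw [radialFn_smul Q _ hpos]
  · -- centroid
    have hd : LinearMap.det (S : Euc n →ₗ[ℝ] Euc n) ≠ 0 := (LinearEquiv.isUnit_det' S).ne_zero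
    let e : Euc n ≃ᵐ Euc n := S.toContinuousLinearEquiv.toHomeomorph.toMeasurableEquiv
    have he : ⇑e = ⇑S := rfl
    have hmap : Measure.map (⇑e) (volume : Measure (Euc n))
        = ENNReal.ofReal |(LinearMap.det (S : Euc n →ₗ[ℝ] Euc n))⁻¹| • volume := by
      rw [he, ← LinearEquiv.coe_coe]
      exact Measure.map_linearMap_addHaar_eq_smul_addHaar volume hd
    have hpre : ⇑e ⁻¹' (⇑S '' Q) = Q := by
      rw [he]
      exact S.toEquiv.preimage_image Q
    have hInt : IntegrableOn (fun x : Euc n => x) Q volume :=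
      ContinuousOn.integrableOn_compact hQ.compact continuousOn_id
    have key := setIntegral_map_equiv (μ := (volume : Measure (Euc n))) e (fun y : Euc n => y) (⇑S '' Q)
    rw [hmap, hpre] at key
    rw [Measure.restrict_smul, integral_smul_measure] at key
    have hR : (∫ x in Q, e x) = (0 : Euc n) := by
      have : (∫ x in Q, e x) = ∫ x in Q, (S.toContinuousLinearEquiv : Euc n →L[ℝ] Euc n) x := by
        rw [he]; rfl
      rw [this, ContinuousLinearMap.integral_comp_comm _ hInt, hQ.centroid_zero, map_zero]
    rw [hR] at key
    have htoReal : (ENNReal.ofReal |(LinearMap.det (S : Euc n →ₗ[ℝ] Euc n))⁻¹|).toReal ≠ 0 := by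
      rw [ENNReal.toReal_ofReal (abs_nonneg _)]
      simpa [abs_eq_zero] using inv_ne_zero hd
    rcases smul_eq_zero.1 key with h | h
    · exact absurd h htoReal
    · exact h

lemma polar_image (S T : Euc n ≃ₗ[ℝ] Euc n)
    (hadj : ∀ x y : Euc n, ⟪S x, y⟫ = ⟪x, T y⟫) (Q : Set (Euc n)) :
    polarSet (⇑S '' Q) = ⇑T.symm '' polarSet Q := by
  ext y
  constructor
  · intro hy
    refine ⟨T y, fun x hx => ?_, T.symm_apply_apply y⟩
    have := hy (S x) (mem_image_of_mem _ hx)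
    rwa [hadj] at this
  · rintro ⟨w, hw, rfl⟩ z ⟨x, hx, rfl⟩
    rw [hadj, T.apply_symm_apply]
    exact hw x hx


lemma asa_map (f : Euc n → ℝ) (T : Euc n ≃ₗ[ℝ] Euc n) {y : ℝ} (hy : y ∈ asaSet n f) :
    |LinearMap.det (T : Euc n →ₗ[ℝ] Euc n)| ^ ((1:ℝ)/n - 1) * y
      ∈ asaSet n (fun x => f (T x)) := by
  obtain ⟨Q, a, hQ, hVar, rfl⟩ := hy
  set d := LinearMap.det (T : Euc n →ₗ[ℝ] Euc n) with hd
  have hd0 : d ≠ 0 := (LinearEquiv.isUnit_det' T).ne_zero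
  have hD : 0 < |d| := abs_pos.2 hd0
  set S := adjEquiv T with hS
  have hdetS : LinearMap.det (S : Euc n →ₗ[ℝ] Euc n) = d := by
    rw [hS, adjEquiv_coe, det_adjoint]
  have hadj : ∀ x y : Euc n, ⟪S x, y⟫ = ⟪x, T y⟫ := by
    intro x y
    rw [hS, adjEquiv_apply, LinearMap.adjoint_inner_left]
    rfl
  refine ⟨⇑S '' Q, |d|⁻¹ * a, isCSB_image S hQ, ?_, ?_⟩
  · rw [polar_image S T hadj]
    exact hasVar_comp f T (polarSet Q) hVar
  · have hvol : (volume (⇑S '' Q)).toReal = |d| * (volume Q).toReal := by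
      have h := Measure.addHaar_image_linearMap (μ := (volume : Measure (Euc n)))
        (S : Euc n →ₗ[ℝ] Euc n) Q
      rw [LinearEquiv.coe_coe] at h
      rw [h, hdetS, ENNReal.toReal_mul, ENNReal.toReal_ofReal (abs_nonneg _)]
    rw [hvol, Real.mul_rpow (abs_nonneg _) ENNReal.toReal_nonneg,
      show ((1:ℝ)/n - 1) = -1 + 1/n by ring, Real.rpow_add hD, Real.rpow_neg_one]
    ring

lemma asa_set_eq (f : Euc n → ℝ) (T : Euc n ≃ₗ[ℝ] Euc n) :
    asaSet n (fun x => f (T x))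
      = (fun y => |LinearMap.det (T : Euc n →ₗ[ℝ] Euc n)| ^ ((1:ℝ)/n - 1) * y)
          '' asaSet n f := by
  set d := LinearMap.det (T : Euc n →ₗ[ℝ] Euc n) with hd
  have hd0 : d ≠ 0 := (LinearEquiv.isUnit_det' T).ne_zero
  have hD : 0 < |d| := abs_pos.2 hd0
  have hc0 : |d| ^ ((1:ℝ)/n - 1) ≠ 0 := (Real.rpow_pos_of_pos hD _).ne'
  apply Subset.antisymm
  · intro y' hy'
    have h2 := asa_map (fun x => f (T x)) T.symm (y := y') hy'
    simp only [T.apply_symm_apply] at h2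
    have hdet_symm : |LinearMap.det (T.symm : Euc n →ₗ[ℝ] Euc n)| = |d|⁻¹ := by
      rw [LinearEquiv.det_coe_symm, abs_inv]
    rw [hdet_symm, Real.inv_rpow (abs_nonneg _)] at h2
    refine ⟨_, h2, ?_⟩
    show |d| ^ ((1:ℝ)/n - 1) * ((|d| ^ ((1:ℝ)/n - 1))⁻¹ * y') = y'
    rw [← mul_assoc, mul_inv_cancel₀ hc0, one_mul]
  · rintro _ ⟨y, hy, rfl⟩
    exact asa_map f T hy

lemma sInf_asa (f : Euc n → ℝ) (T : Euc n ≃ₗ[ℝ] Euc n) :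
    sInf (asaSet n (fun x => f (T x)))
      = |LinearMap.det (T : Euc n →ₗ[ℝ] Euc n)| ^ ((1:ℝ)/n - 1) * sInf (asaSet n f) := by
  rw [asa_set_eq f T]
  rw [show ((fun y => |LinearMap.det (T : Euc n →ₗ[ℝ] Euc n)| ^ ((1:ℝ)/n - 1) * y)
      '' asaSet n f)
      = |LinearMap.det (T : Euc n →ₗ[ℝ] Euc n)| ^ ((1:ℝ)/n - 1) • asaSet n f from by
    simp only [← smul_eq_mul, Set.image_smul]]
  rw [Real.sInf_smul_of_nonneg (Real.rpow_nonneg (abs_nonneg _) _), smul_eq_mul]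

end StmtAux

theorem stmt8 {n : ℕ} (hn : 1 ≤ n) (f : Euc n → ℝ) (hf : MemLC f)
    (T : Euc n ≃ₗ[ℝ] Euc n) :
    affSA n (fun x => f (T x))
        = |LinearMap.det (T : Euc n →ₗ[ℝ] Euc n)| ^ (-(((n : ℝ) - 1) / ((n : ℝ) + 1)))
          * affSA n f ∧
      (|LinearMap.det (T : Euc n →ₗ[ℝ] Euc n)| = 1 →
        affSA n (fun x => f (T x)) = affSA n f) := by classical
  have hn0 : (0:ℝ) < (n:ℝ) := by exact_mod_cast Nat.pos_of_ne_zero (by omega)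
  have hn1 : (0:ℝ) < (n:ℝ) + 1 := by positivity
  set d := LinearMap.det (T : Euc n →ₗ[ℝ] Euc n) with hd
  have hd0 : d ≠ 0 := (LinearEquiv.isUnit_det' T).ne_zero
  have hD : 0 < |d| := abs_pos.2 hd0
  have hp : ((n:ℝ)/((n:ℝ)+1)) ≠ 0 := by positivity
  have key : affSA n (fun x => f (T x))
      = |d| ^ (-(((n : ℝ) - 1) / ((n : ℝ) + 1))) * affSA n f := by
    unfold affSA
    rw [StmtAux.sInf_asa f T,
      StmtAux.mul_rpow_pos_left (Real.rpow_pos_of_pos hD _) _ hp,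
      ← Real.rpow_mul (abs_nonneg _)]
    have hexp : ((1:ℝ)/n - 1) * ((n:ℝ)/((n:ℝ)+1)) = -(((n:ℝ)-1)/((n:ℝ)+1)) := by
      field_simp
      ring
    rw [hexp]
    ring
  exact ⟨key, fun h1 => by rw [key, h1, Real.one_rpow, one_mul]⟩

end
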